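/- Let H be a Hilbert space, x₁, …, xₙ ∈ H nonzero vectors, a ∈ H a unit vector, and r ≥ 0 with r‖xᵢ‖ ≤ Re⟨xᵢ, a⟩ for all i ∈ {1, …, n}. Then r · ∑ᵢ₌₁ⁿ ‖xᵢ‖ ≤ ‖∑ᵢ₌₁ⁿ xᵢ‖ (Diaz–Metcalf inequality). -/

import Mathlib

theorem stmt_17 {𝕜 H : Type*} [RCLike 𝕜] [NormedAddCommGroup H] [InnerProductSpace 𝕜 H]
    {n : ℕ} {x : Fin n → H} (hx : ∀ i, x i ≠ 0) {A : H} (hA : ‖A‖ = 1)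
    {r : ℝ} (hr : 0 ≤ r) (h : ∀ i, r * ‖x i‖ ≤ RCLike.re (inner 𝕜 (x i) A : 𝕜)) :
    r * ∑ i, ‖x i‖ ≤ ‖∑ i, x i‖ := by
  calc r * ∑ i, ‖x i‖ = ∑ i, r * ‖x i‖ := by rw [Finset.mul_sum]
    _ ≤ ∑ i, RCLike.re (inner 𝕜 (x i) A : 𝕜) := Finset.sum_le_sum fun i _ => h i
    _ = RCLike.re (inner 𝕜 (∑ i, x i) A : 𝕜) := by rw [sum_inner, map_sum]
    _ ≤ ‖(inner 𝕜 (∑ i, x i) A : 𝕜)‖ := RCLike.re_le_norm _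
    _ ≤ ‖∑ i, x i‖ * ‖A‖ := norm_inner_le_norm _ _
    _ = ‖∑ i, x i‖ := by rw [hA, mul_one]
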